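/- Let a > 0, η : [0,a] → [0,∞) a continuous non-decreasing function with η(0) = 0 and ∫₀^a dz/η(z) = ∞ (an Osgood modulus). Let f : [t₀,T] → [0,a] be measurable, v : [t₀,T] → [0,∞) locally integrable, and suppose f(t) ≤ ∫_{t₀}^t v(s) η(f(s)) ds for a.e. t. Then f = 0 a.e. on [t₀,T]. -/

import Mathlib

open MeasureTheory

/-- Osgood's lemma, case `c = 0`: if `η` is a continuous non-decreasing Osgood modulus
(`η(0) = 0`, `∫₀^a dz/η(z) = ∞`) and `f : [t₀,T] → [0,a]` is measurable with
`f(t) ≤ ∫_{t₀}^t v(s) η(f(s)) ds` for a.e. `t`, then `f = 0` a.e. on `[t₀,T]`. -/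
theorem osgood_zero (a t₀ T : ℝ) (ha : 0 < a) (htT : t₀ ≤ T)
    (η : ℝ → ℝ) (hηc : ContinuousOn η (Set.Icc 0 a)) (hηm : MonotoneOn η (Set.Icc 0 a))
    (hη0 : η 0 = 0) (hηnn : ∀ z ∈ Set.Icc (0 : ℝ) a, 0 ≤ η z)
    (hOsgood : (∫⁻ z in Set.Ioc (0 : ℝ) a, ENNReal.ofReal (1 / η z)) = ⊤)
    (f : ℝ → ℝ) (hf : Measurable f) (hfmem : ∀ t ∈ Set.Icc t₀ T, f t ∈ Set.Icc 0 a)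
    (v : ℝ → ℝ) (hvnn : ∀ s ∈ Set.Icc t₀ T, 0 ≤ v s)
    (hvint : IntegrableOn v (Set.Icc t₀ T))
    (hineq : ∀ᵐ t ∂(volume.restrict (Set.Icc t₀ T)),
      f t ≤ ∫ s in Set.Icc t₀ t, v s * η (f s)) :
    ∀ᵐ t ∂(volume.restrict (Set.Icc t₀ T)), f t = 0 := by
  classical
  -- truncation of η to a globally monotone function
  set p : ℝ → ℝ := fun z => max 0 (min z a) with hp
  have hpmem : ∀ z, p z ∈ Set.Icc 0 a := fun z =>
    ⟨le_max_left _ _, max_le ha.le (min_le_right _ _)⟩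
  have hpmono : Monotone p := fun z z' h =>
    max_le_max le_rfl (min_le_min h le_rfl)
  have hpid : ∀ z ∈ Set.Icc (0:ℝ) a, p z = z := by
    intro z hz
    simp only [hp, min_eq_left hz.2, max_eq_right hz.1]
  set η' : ℝ → ℝ := fun z => η (p z) with hη'
  have hη'eq : ∀ z ∈ Set.Icc (0:ℝ) a, η' z = η z := by
    intro z hz; simp only [hη', hpid z hz]
  have hη'mono : Monotone η' := fun z z' h => hηm (hpmem z) (hpmem z') (hpmono h)
  have hη'nn : ∀ z, 0 ≤ η' z := fun z => hηnn _ (hpmem z)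
  have hη'le : ∀ z, η' z ≤ η a := fun z =>
    hηm (hpmem z) ⟨ha.le, le_rfl⟩ (hpmem z).2
  have hη'meas : Measurable η' := hη'mono.measurable
  -- the nonnegative integrand
  set w : ℝ → ℝ := fun s => max (v s) 0 * η' (f s) with hw
  have hwnn : ∀ s, 0 ≤ w s := fun s => mul_nonneg (le_max_right _ _) (hη'nn _)
  have hwint : IntegrableOn w (Set.Icc t₀ T) := by
    refine Integrable.mono (hvint.const_mul (η a)) ?_ ?_
    · exact ((hvint.aestronglyMeasurable.sup aestronglyMeasurable_const).mul
        ((hη'meas.comp hf).aestronglyMeasurable))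
    · refine Filter.Eventually.of_forall fun s => ?_
      have h1 : 0 ≤ η a := hηnn a ⟨ha.le, le_rfl⟩
      have h2 : max (v s) 0 ≤ |v s| := max_le (le_abs_self _) (abs_nonneg _)
      rw [Real.norm_eq_abs, Real.norm_eq_abs, abs_of_nonneg (hwnn s), abs_mul,
        abs_of_nonneg h1]
      calc max (v s) 0 * η' (f s) ≤ |v s| * η a :=
            mul_le_mul h2 (hη'le _) (hη'nn _) (abs_nonneg _)
        _ = η a * |v s| := mul_comm _ _
  have hvpint : IntegrableOn (fun s => max (v s) 0) (Set.Icc t₀ T) := hvint.pos_part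
  -- interval integrability
  have hwiv : ∀ {c d : ℝ}, c ∈ Set.Icc t₀ T → d ∈ Set.Icc t₀ T →
      IntervalIntegrable w volume c d := by
    intro c d hc hd
    exact (hwint.mono_set (Set.uIcc_subset_Icc hc hd)).intervalIntegrable
  have hvpiv : ∀ {c d : ℝ}, c ∈ Set.Icc t₀ T → d ∈ Set.Icc t₀ T →
      IntervalIntegrable (fun s => max (v s) 0) volume c d := by
    intro c d hc hd
    exact (hvpint.mono_set (Set.uIcc_subset_Icc hc hd)).intervalIntegrable
  -- the primitive F
  set F : ℝ → ℝ := fun t => ∫ s in t₀..t, w s with hF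
  have hF0 : F t₀ = 0 := intervalIntegral.integral_same
  have hFcont : ContinuousOn F (Set.Icc t₀ T) := by
    refine (intervalIntegral.continuousOn_primitive (f := w) (μ := volume) hwint).congr ?_
    intro t ht
    simp only [hF]
    rw [intervalIntegral.integral_of_le ht.1]
  have hFdiff : ∀ c d, c ∈ Set.Icc t₀ T → d ∈ Set.Icc t₀ T →
      F d - F c = ∫ s in c..d, w s := by
    intro c d hc hd
    have h := intervalIntegral.integral_add_adjacent_intervals
      (hwiv (Set.left_mem_Icc.mpr htT) hc) (hwiv hc hd)
    simp only [hF]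
    linarith [h]
  have hFmono : ∀ c d, c ∈ Set.Icc t₀ T → d ∈ Set.Icc t₀ T → c ≤ d → F c ≤ F d := by
    intro c d hc hd hcd
    have h := hFdiff c d hc hd
    have h2 : 0 ≤ ∫ s in c..d, w s :=
      intervalIntegral.integral_nonneg hcd fun u _ => hwnn u
    linarith
  have hFnn : ∀ t ∈ Set.Icc t₀ T, 0 ≤ F t := by
    intro t ht
    have := hFmono t₀ t (Set.left_mem_Icc.mpr htT) ht ht.1
    rw [hF0] at this; exact this
  -- identification of the hypothesis integral with F
  have hFint_eq : ∀ t ∈ Set.Icc t₀ T, (∫ s in Set.Icc t₀ t, v s * η (f s)) = F t := by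
    intro t ht
    have h1 : Set.EqOn (fun s => v s * η (f s)) w (Set.Icc t₀ t) := by
      intro s hs
      have hs' : s ∈ Set.Icc t₀ T := ⟨hs.1, hs.2.trans ht.2⟩
      simp only [hw]
      rw [max_eq_left (hvnn s hs'), hη'eq _ (hfmem s hs')]
    rw [setIntegral_congr_fun measurableSet_Icc h1, integral_Icc_eq_integral_Ioc,
      ← intervalIntegral.integral_of_le ht.1]
  have haef : ∀ᵐ t ∂(volume.restrict (Set.Icc t₀ T)), f t ≤ F t := by
    filter_upwards [hineq, ae_restrict_mem measurableSet_Icc] with t h1 h2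
    rwa [hFint_eq t h2] at h1
  -- the key differential inequality in integrated form
  have hkey : ∀ c d, c ∈ Set.Icc t₀ T → d ∈ Set.Icc t₀ T → c ≤ d →
      F d - F c ≤ η' (F d) * ∫ s in c..d, max (v s) 0 := by
    intro c d hc hd hcd
    rw [hFdiff c d hc hd, ← intervalIntegral.integral_const_mul]
    refine intervalIntegral.integral_mono_ae_restrict hcd (hwiv hc hd)
      ((hvpiv hc hd).const_mul _) ?_
    have hsub : Set.Icc c d ⊆ Set.Icc t₀ T := Set.Icc_subset_Icc hc.1 hd.2
    have h1 := ae_restrict_of_ae_restrict_of_subset hsub haef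
    filter_upwards [h1, ae_restrict_mem measurableSet_Icc] with s h2 h3
    have hsmem : s ∈ Set.Icc t₀ T := hsub h3
    have h4 : f s ≤ F d := h2.trans (hFmono s d hsmem hd h3.2)
    calc w s = max (v s) 0 * η' (f s) := rfl
      _ ≤ max (v s) 0 * η' (F d) :=
          mul_le_mul_of_nonneg_left (hη'mono h4) (le_max_right _ _)
      _ = η' (F d) * max (v s) 0 := mul_comm _ _
  -- it suffices to show F T = 0
  suffices hFT : F T = 0 by
    have hFzero : ∀ t ∈ Set.Icc t₀ T, F t = 0 := by
      intro t ht
      have h1 := hFmono t T ht (Set.right_mem_Icc.mpr htT) ht.2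
      rw [hFT] at h1
      exact le_antisymm h1 (hFnn t ht)
    filter_upwards [haef, ae_restrict_mem measurableSet_Icc] with t h1 h2
    have h3 := (hfmem t h2).1
    rw [hFzero t h2] at h1
    linarith
  by_contra hFTne
  have hFTpos : 0 < F T :=
    (hFnn T (Set.right_mem_Icc.mpr htT)).lt_of_ne (Ne.symm hFTne)
  set b : ℝ := min (F T) a with hbdef
  have hb0 : 0 < b := lt_min hFTpos ha
  have hba : b ≤ a := min_le_right _ _
  obtain ⟨T', hT'mem, hFT'⟩ : ∃ T' ∈ Set.Icc t₀ T, F T' = b := by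
    have h := intermediate_value_Icc htT hFcont
    have hbmem : b ∈ Set.Icc (F t₀) (F T) := ⟨by rw [hF0]; exact hb0.le, min_le_left _ _⟩
    exact h hbmem
  have ht₀mem : t₀ ∈ Set.Icc t₀ T := Set.left_mem_Icc.mpr htT
  have hTmem : T ∈ Set.Icc t₀ T := Set.right_mem_Icc.mpr htT
  -- η has no zeros in (0, b]
  have hηpos : ∀ c ∈ Set.Ioc (0:ℝ) b, 0 < η c := by
    intro c hc
    by_contra hle
    push_neg at hle
    have hca : c ∈ Set.Icc (0:ℝ) a := ⟨hc.1.le, hc.2.trans hba⟩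
    have hc0 : η c = 0 := le_antisymm hle (hηnn c hca)
    obtain ⟨T₁, hT₁mem, hFT₁⟩ : ∃ x ∈ Set.Icc t₀ T', F x = c :=
      intermediate_value_Icc hT'mem.1 (hFcont.mono (Set.Icc_subset_Icc le_rfl hT'mem.2))
        ⟨by rw [hF0]; exact hc.1.le, by rw [hFT']; exact hc.2⟩
    have hT₁T : T₁ ∈ Set.Icc t₀ T := ⟨hT₁mem.1, hT₁mem.2.trans hT'mem.2⟩
    have h1 := hkey t₀ T₁ ht₀mem hT₁T hT₁mem.1
    rw [hF0, sub_zero, hFT₁] at h1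
    rw [hη'eq c hca, hc0, zero_mul] at h1
    exact absurd h1 (not_le.mpr hc.1)
  -- interval integrability of 1/η
  have hiv1η : ∀ {x y : ℝ}, 0 < x → x ≤ y → y ≤ b →
      IntervalIntegrable (fun z => (η z)⁻¹) volume x y := by
    intro x y hx hxy hyb
    apply ContinuousOn.intervalIntegrable
    rw [Set.uIcc_of_le hxy]
    refine ContinuousOn.inv₀ (hηc.mono (Set.Icc_subset_Icc hx.le (hyb.trans hba))) ?_
    intro z hz
    exact ne_of_gt (hηpos z ⟨hx.trans_le hz.1, hz.2.trans hyb⟩)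
  -- one step of the chaining argument
  have hstep : ∀ x y τ σ, 0 < x → x ≤ y → y ≤ b → τ ∈ Set.Icc t₀ T' →
      σ ∈ Set.Icc τ T' → F τ = x → F σ = y → η y ≤ 2 * η x →
      (∫ z in x..y, (η z)⁻¹) ≤ 2 * ∫ s in τ..σ, max (v s) 0 := by
    intro x y τ σ hx hxy hyb hτ hσ hFτ hFσ hηxy
    have hηx := hηpos x ⟨hx, hxy.trans hyb⟩
    have hτT : τ ∈ Set.Icc t₀ T := ⟨hτ.1, hτ.2.trans hT'mem.2⟩
    have hσT : σ ∈ Set.Icc t₀ T := ⟨hτ.1.trans hσ.1, hσ.2.trans hT'mem.2⟩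
    have hya : y ∈ Set.Icc (0:ℝ) a := ⟨hx.le.trans hxy, hyb.trans hba⟩
    have h1 : (∫ z in x..y, (η z)⁻¹) ≤ (y - x) * (η x)⁻¹ := by
      have h2 : (∫ z in x..y, (η z)⁻¹) ≤ ∫ _z in x..y, (η x)⁻¹ := by
        refine intervalIntegral.integral_mono_on hxy (hiv1η hx hxy hyb)
          intervalIntegrable_const ?_
        intro z hz
        have hz1 : z ∈ Set.Icc (0:ℝ) a := ⟨hx.le.trans hz.1, hz.2.trans (hyb.trans hba)⟩
        have := hηm ⟨hx.le, hxy.trans (hyb.trans hba)⟩ hz1 hz.1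
        exact inv_anti₀ hηx this
      simpa using h2
    have h2 : y - x ≤ η y * ∫ s in τ..σ, max (v s) 0 := by
      have h3 := hkey τ σ hτT hσT hσ.1
      rw [hFτ, hFσ, hη'eq y hya] at h3
      exact h3
    set I := ∫ s in τ..σ, max (v s) 0 with hI
    have hInn : 0 ≤ I :=
      intervalIntegral.integral_nonneg hσ.1 fun u _ => le_max_right _ _
    have hηynn : 0 ≤ η y := hηnn y hya
    calc (∫ z in x..y, (η z)⁻¹) ≤ (y - x) * (η x)⁻¹ := h1
      _ ≤ (η y * I) * (η x)⁻¹ :=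
          mul_le_mul_of_nonneg_right h2 (inv_nonneg.mpr hηx.le)
      _ ≤ (2 * η x * I) * (η x)⁻¹ := by
          have : η y * I ≤ 2 * η x * I := mul_le_mul_of_nonneg_right hηxy hInn
          exact mul_le_mul_of_nonneg_right this (inv_nonneg.mpr hηx.le)
      _ = 2 * I * (η x * (η x)⁻¹) := by ring
      _ = 2 * I := by rw [mul_inv_cancel₀ (ne_of_gt hηx), mul_one]
  have hT'T : T' ∈ Set.Icc t₀ T := hT'mem
  -- the chaining argument
  have hchain : ∀ n : ℕ, ∀ x τ, 0 < x → x ≤ b → τ ∈ Set.Icc t₀ T' → F τ = x →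
      η b ≤ 2 ^ n * η x →
      (∫ z in x..b, (η z)⁻¹) ≤ 2 * ∫ s in τ..T', max (v s) 0 := by
    intro n
    induction n with
    | zero =>
      intro x τ hx hxb hτ hFτ hle
      simp only [pow_zero, one_mul] at hle
      have hηx := hηpos x ⟨hx, hxb⟩
      exact hstep x b τ T' hx hxb le_rfl hτ ⟨hτ.2, le_rfl⟩ hFτ hFT'
        (by linarith)
    | succ n ih =>
      intro x τ hx hxb hτ hFτ hle
      have hηx := hηpos x ⟨hx, hxb⟩
      set S : Set ℝ := {y' | y' ∈ Set.Icc x b ∧ η y' ≤ 2 * η x} with hS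
      have hSsub : S ⊆ Set.Icc x b := fun z hz => hz.1
      have hSne : S.Nonempty := ⟨x, ⟨le_rfl, hxb⟩, by linarith⟩
      have hScl : IsClosed S := by
        have : S = Set.Icc x b ∩ η ⁻¹' Set.Iic (2 * η x) := rfl
        rw [this]
        exact ContinuousOn.preimage_isClosed_of_isClosed
          (hηc.mono (Set.Icc_subset_Icc hx.le hba)) isClosed_Icc isClosed_Iic
      have hScomp : IsCompact S := isCompact_Icc.of_isClosed_subset hScl hSsub
      set y : ℝ := sSup S with hy
      have hyS : y ∈ S := hScomp.sSup_mem hSne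
      obtain ⟨⟨hxy, hyb⟩, hηy⟩ := hyS
      obtain ⟨σ, hσmem, hFσ⟩ : ∃ σ ∈ Set.Icc τ T', F σ = y :=
        intermediate_value_Icc hτ.2 (hFcont.mono (Set.Icc_subset_Icc hτ.1 hT'mem.2))
          ⟨by rw [hFτ]; exact hxy, by rw [hFT']; exact hyb⟩
      have hσT' : σ ∈ Set.Icc t₀ T' := ⟨hτ.1.trans hσmem.1, hσmem.2⟩
      have hσT : σ ∈ Set.Icc t₀ T := ⟨hσT'.1, hσT'.2.trans hT'mem.2⟩
      have hτT : τ ∈ Set.Icc t₀ T := ⟨hτ.1, hτ.2.trans hT'mem.2⟩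
      have h1 := hstep x y τ σ hx hxy hyb hτ hσmem hFτ hFσ hηy
      have hadd2 := intervalIntegral.integral_add_adjacent_intervals
        (hvpiv hτT hσT) (hvpiv hσT hT'T)
      rcases eq_or_lt_of_le hyb with heq | hlt
      · rw [heq] at h1
        have h2 : 0 ≤ ∫ s in σ..T', max (v s) 0 :=
          intervalIntegral.integral_nonneg hσmem.2 fun u _ => le_max_right _ _
        linarith
      · -- y < b : then η y = 2 η x
        have hy2 : 2 * η x ≤ η y := by
          by_contra hlt2
          push_neg at hlt2
          have hcw : ContinuousWithinAt η (Set.Icc x b) y :=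
            (hηc.mono (Set.Icc_subset_Icc hx.le hba)).continuousWithinAt
              ⟨hxy, hyb⟩
          have hev : ∀ᶠ z in nhdsWithin y (Set.Icc x b), η z < 2 * η x :=
            Filter.Tendsto.eventually_lt_const hlt2 hcw
          have hsub2 : Set.Ioc y b ⊆ Set.Icc x b := fun z hz =>
            ⟨hxy.trans hz.1.le, hz.2⟩
          have hev2 : ∀ᶠ z in nhdsWithin y (Set.Ioc y b), η z < 2 * η x :=
            hev.filter_mono (nhdsWithin_mono y hsub2)
          have hne : (nhdsWithin y (Set.Ioc y b)).NeBot := left_nhdsWithin_Ioc_neBot hlt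
          obtain ⟨z, hz1, hz2⟩ :=
            (hev2.and (eventually_mem_nhdsWithin (s := Set.Ioc y b))).exists
          have hzS : z ∈ S := ⟨⟨hxy.trans hz2.1.le, hz2.2⟩, hz1.le⟩
          have := le_csSup hScomp.bddAbove hzS
          exact absurd this (not_le.mpr hz2.1)
        have hηyeq : η y = 2 * η x := le_antisymm hηy hy2
        have hih := ih y σ (hx.trans_le hxy) hyb hσT' hFσ
          (by rw [hηyeq]; calc η b ≤ 2 ^ (n + 1) * η x := hle
                _ = 2 ^ n * (2 * η x) := by ring)
        have hadd1 := intervalIntegral.integral_add_adjacent_intervals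
          (hiv1η hx hxy hyb) (hiv1η (hx.trans_le hxy) hyb le_rfl)
        linarith
  -- uniform bound on the truncated Osgood integrals
  have hbound : ∀ ε : ℝ, 0 < ε → ε < b →
      (∫ z in ε..b, (η z)⁻¹) ≤ 2 * ∫ s in t₀..T, max (v s) 0 := by
    intro ε hε hεb
    have hηε := hηpos ε ⟨hε, hεb.le⟩
    obtain ⟨n, hn⟩ := pow_unbounded_of_one_lt (η b / η ε) (one_lt_two)
    have hn' : η b ≤ 2 ^ n * η ε := by
      rw [div_lt_iff₀ hηε] at hn
      linarith
    obtain ⟨τ, hτ, hFτ⟩ : ∃ τ ∈ Set.Icc t₀ T', F τ = ε :=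
      intermediate_value_Icc hT'mem.1 (hFcont.mono (Set.Icc_subset_Icc le_rfl hT'mem.2))
        ⟨by rw [hF0]; exact hε.le, by rw [hFT']; exact hεb.le⟩
    have h := hchain n ε τ hε hεb.le hτ hFτ hn'
    have hτT : τ ∈ Set.Icc t₀ T := ⟨hτ.1, hτ.2.trans hT'mem.2⟩
    have e1 := intervalIntegral.integral_add_adjacent_intervals
      (hvpiv ht₀mem hτT) (hvpiv hτT hT'T)
    have e2 := intervalIntegral.integral_add_adjacent_intervals
      (hvpiv ht₀mem hT'T) (hvpiv hT'T hTmem)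
    have n1 : 0 ≤ ∫ s in t₀..τ, max (v s) 0 :=
      intervalIntegral.integral_nonneg hτ.1 fun u _ => le_max_right _ _
    have n2 : 0 ≤ ∫ s in T'..T, max (v s) 0 :=
      intervalIntegral.integral_nonneg hT'mem.2 fun u _ => le_max_right _ _
    linarith
  set V : ℝ := 2 * ∫ s in t₀..T, max (v s) 0 with hVdef
  -- the Osgood integral diverges near 0 on (0, b]
  have htop : (∫⁻ z in Set.Ioc (0:ℝ) b, ENNReal.ofReal (1 / η z)) = ⊤ := by
    by_contra hne
    have hηb := hηpos b ⟨hb0, le_rfl⟩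
    have hfin2 : (∫⁻ z in Set.Ioc b a, ENNReal.ofReal (1 / η z)) < ⊤ := by
      have hmle : ∀ᵐ z ∂(volume.restrict (Set.Ioc b a)),
          ENNReal.ofReal (1 / η z) ≤ ENNReal.ofReal (1 / η b) := by
        filter_upwards [ae_restrict_mem measurableSet_Ioc] with z hz
        apply ENNReal.ofReal_le_ofReal
        rw [one_div, one_div]
        exact inv_anti₀ hηb
          (hηm ⟨hb0.le, hba⟩ ⟨hb0.le.trans hz.1.le, hz.2⟩ hz.1.le)
      calc (∫⁻ z in Set.Ioc b a, ENNReal.ofReal (1 / η z))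
          ≤ ∫⁻ _z in Set.Ioc b a, ENNReal.ofReal (1 / η b) := lintegral_mono_ae hmle
        _ = ENNReal.ofReal (1 / η b) * volume (Set.Ioc b a) := by
            rw [setLIntegral_const]
        _ < ⊤ := by
            apply ENNReal.mul_lt_top ENNReal.ofReal_lt_top
            rw [Real.volume_Ioc]
            exact ENNReal.ofReal_lt_top
    have hsplit : Set.Ioc (0:ℝ) a = Set.Ioc 0 b ∪ Set.Ioc b a :=
      (Set.Ioc_union_Ioc_eq_Ioc hb0.le hba).symm
    rw [hsplit, lintegral_union measurableSet_Ioc (Set.Ioc_disjoint_Ioc_of_le le_rfl)] at hOsgood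
    exact absurd hOsgood (ENNReal.add_ne_top.mpr ⟨hne, hfin2.ne⟩)
  have htop' : (∫⁻ z in Set.Ioc (0:ℝ) b, ENNReal.ofReal (η' z)⁻¹) = ⊤ := by
    rw [← htop]
    refine setLIntegral_congr_fun_ae measurableSet_Ioc (Filter.Eventually.of_forall ?_)
    intro z hz
    show ENNReal.ofReal (η' z)⁻¹ = ENNReal.ofReal (1 / η z)
    rw [one_div, hη'eq z ⟨hz.1.le, hz.2.trans hba⟩]
  -- the capped integrals are uniformly bounded
  have hcap : ∀ n : ℕ, (∫⁻ z in Set.Ioc (b / (n + 1)) b, ENNReal.ofReal (η' z)⁻¹)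
      ≤ ENNReal.ofReal V := by
    intro n
    set ε : ℝ := b / (n + 1) with hεdef
    have hε : 0 < ε := div_pos hb0 (by positivity)
    rcases lt_or_ge ε b with hεb | hbε
    · have hcont1 : ContinuousOn (fun z => (η z)⁻¹) (Set.Icc ε b) := by
        refine ContinuousOn.inv₀ (hηc.mono (Set.Icc_subset_Icc hε.le hba)) ?_
        intro z hz
        exact ne_of_gt (hηpos z ⟨hε.trans_le hz.1, hz.2⟩)
      have hint0 : IntegrableOn (fun z => (η z)⁻¹) (Set.Icc ε b) :=
        hcont1.integrableOn_Icc
      have hint : IntegrableOn (fun z => (η' z)⁻¹) (Set.Ioc ε b) := by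
        refine IntegrableOn.congr_fun (hint0.mono_set Set.Ioc_subset_Icc_self) ?_
          measurableSet_Ioc
        intro z hz
        show (η z)⁻¹ = (η' z)⁻¹
        rw [hη'eq z ⟨(hε.trans hz.1).le, hz.2.trans hba⟩]
      have hnn : 0 ≤ᵐ[volume.restrict (Set.Ioc ε b)] fun z => (η' z)⁻¹ :=
        Filter.Eventually.of_forall fun z => inv_nonneg.mpr (hη'nn z)
      rw [← ofReal_integral_eq_lintegral_ofReal hint hnn]
      apply ENNReal.ofReal_le_ofReal
      have heqi : (∫ z in Set.Ioc ε b, (η' z)⁻¹) = ∫ z in Set.Ioc ε b, (η z)⁻¹ := by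
        refine setIntegral_congr_fun measurableSet_Ioc ?_
        intro z hz
        show (η' z)⁻¹ = (η z)⁻¹
        rw [hη'eq z ⟨(hε.trans hz.1).le, hz.2.trans hba⟩]
      rw [heqi, ← intervalIntegral.integral_of_le hεb.le]
      exact hbound ε hε hεb
    · rw [Set.Ioc_eq_empty (not_lt.mpr hbε), Measure.restrict_empty, lintegral_zero_measure]
      exact zero_le
  -- combine via monotone union
  have hg'meas : Measurable fun z => ENNReal.ofReal (η' z)⁻¹ :=
    ENNReal.measurable_ofReal.comp hη'meas.inv
  set ν : Measure ℝ := volume.withDensity fun z => ENNReal.ofReal (η' z)⁻¹ with hν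
  have hνapp : ∀ s : Set ℝ, MeasurableSet s →
      ν s = ∫⁻ z in s, ENNReal.ofReal (η' z)⁻¹ := fun s hs => withDensity_apply _ hs
  have hunion : (⋃ n : ℕ, Set.Ioc (b / (n + 1) : ℝ) b) = Set.Ioc 0 b := by
    ext z
    simp only [Set.mem_iUnion, Set.mem_Ioc]
    constructor
    · rintro ⟨n, h1, h2⟩
      have hpos : (0:ℝ) < b / (n + 1) := div_pos hb0 (by positivity)
      exact ⟨hpos.trans h1, h2⟩
    · rintro ⟨hz0, hzb⟩
      obtain ⟨n, hn⟩ := exists_nat_gt (b / z)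
      refine ⟨n, ?_, hzb⟩
      rw [div_lt_iff₀ (by positivity : (0:ℝ) < (n:ℝ) + 1)]
      have h2 : b / z < (n:ℝ) + 1 := hn.trans (by linarith)
      rw [div_lt_iff₀ hz0] at h2
      linarith
  have hmonot : Monotone fun n : ℕ => Set.Ioc (b / (n + 1) : ℝ) b := by
    intro m n hmn
    apply Set.Ioc_subset_Ioc_left
    have h1 : ((m:ℝ) + 1) ≤ (n:ℝ) + 1 := by exact_mod_cast Nat.succ_le_succ hmn
    have h2 : (0:ℝ) < (m:ℝ) + 1 := by positivity
    exact div_le_div_of_nonneg_left hb0.le h2 h1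
  have h1 : ν (Set.Ioc (0:ℝ) b) = ⊤ := by
    rw [hνapp _ measurableSet_Ioc]; exact htop'
  have h2 : ν (Set.Ioc (0:ℝ) b) = ⨆ n : ℕ, ν (Set.Ioc (b / (n + 1) : ℝ) b) := by
    rw [← hunion]
    exact hmonot.directed_le.measure_iUnion
  have h3 : (⨆ n : ℕ, ν (Set.Ioc (b / (n + 1) : ℝ) b)) ≤ ENNReal.ofReal V := by
    refine iSup_le fun n => ?_
    rw [hνapp _ measurableSet_Ioc]
    exact hcap n
  rw [← h2, h1] at h3
  exact absurd (top_le_iff.mp h3) ENNReal.ofReal_ne_top
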